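/- For all integers n ≥ 1, pl̄_4(3n) ≡ 0 (mod 4), where pl̄_4(m) counts plane overpartitions of m with at most 4 rows. -/

import Mathlib

open PowerSeries

/-- The formal power series `(1+q^k)/(1-q^k)` in `ℤ⟦q⟧`. -/
noncomputable def fps (k : ℕ) : PowerSeries ℤ :=
  (1 + (PowerSeries.X : PowerSeries ℤ) ^ k) *
    PowerSeries.invOfUnit (1 - (PowerSeries.X : PowerSeries ℤ) ^ k) 1

/-- The number of overpartitions of `n`: the coefficient of `q^n` in
`∏_{k≥1} (1+q^k)/(1-q^k)`.  Since each factor with `k > n` contributes only `1`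
to coefficients up to degree `n`, the product may be truncated at `k = n`. -/
noncomputable def pbar (n : ℕ) : ℤ :=
  PowerSeries.coeff n (∏ k ∈ Finset.Icc 1 n, fps k)

/-- The number of plane overpartitions of `n` with at most `K` rows: the coefficient
of `q^n` in `∏_{k≥1} ((1+q^k)/(1-q^k))^(min K k)`, truncated at `k = n`. -/
noncomputable def plbark (K n : ℕ) : ℤ :=
  PowerSeries.coeff n (∏ k ∈ Finset.Icc 1 n, fps k ^ min K k)

/- Auxiliary development mod 4 -/

/-- geometric-type series: inverse of `1 - X^k` over `ZMod 4`. -/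
noncomputable def geomZ (k : ℕ) : PowerSeries (ZMod 4) :=
  PowerSeries.mk fun n => if k ∣ n then 1 else 0

lemma coeff_mul_X_pow'' (p : (ZMod 4)⟦X⟧) (k n : ℕ) :
    (coeff n) (X ^ k * p) = if k ≤ n then coeff (n - k) p else 0 := by
  rw [mul_comm, PowerSeries.coeff_mul_X_pow']

lemma one_sub_mul_geomZ {k : ℕ} (hk : 1 ≤ k) :
    (1 - (X : (ZMod 4)⟦X⟧) ^ k) * geomZ k = 1 := by
  ext n
  rw [sub_mul, one_mul, map_sub, coeff_mul_X_pow'']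
  rcases Nat.lt_or_ge n k with h | h
  · rw [if_neg (by omega)]
    rcases Nat.eq_zero_or_pos n with rfl | hn
    · simp [geomZ]
    · simp only [geomZ, coeff_mk, sub_zero]
      rw [if_neg (fun hd => by have := Nat.le_of_dvd hn hd; omega), PowerSeries.coeff_one, if_neg (by omega)]
  · rw [if_pos h, PowerSeries.coeff_one, if_neg (by omega)]
    simp only [geomZ, coeff_mk]
    have : k ∣ n ↔ k ∣ n - k := by
      constructor
      · intro hd; exact (Nat.dvd_sub hd dvd_rfl)
      · intro hd; have := Nat.dvd_add hd (dvd_refl k); rwa [Nat.sub_add_cancel h] at this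
    by_cases hd : k ∣ n
    · rw [if_pos hd, if_pos (this.mp hd), sub_self]
    · rw [if_neg hd, if_neg (fun h2 => hd (this.mpr h2)), sub_self]

noncomputable def φ4 : ℤ →+* ZMod 4 := Int.castRingHom (ZMod 4)

noncomputable def F4 (k : ℕ) : PowerSeries (ZMod 4) := PowerSeries.map φ4 (fps k)

lemma F4_eq {k : ℕ} (hk : 1 ≤ k) :
    F4 k = (1 + (X : (ZMod 4)⟦X⟧) ^ k) * geomZ k := by
  have hk0 : k ≠ 0 := by omega
  have h1 : PowerSeries.constantCoeff (1 - X ^ k : PowerSeries ℤ) = ((1 : ℤˣ) : ℤ) := by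
    simp [map_sub, map_pow, constantCoeff_X, zero_pow hk0]
  have hmul : fps k * (1 - X ^ k) = 1 + (X : PowerSeries ℤ) ^ k := by
    unfold fps
    rw [mul_assoc, mul_comm (PowerSeries.invOfUnit _ _),
      PowerSeries.mul_invOfUnit _ 1 h1, mul_one]
  have hmap : F4 k * (1 - (X : (ZMod 4)⟦X⟧) ^ k) = 1 + (X : (ZMod 4)⟦X⟧) ^ k := by
    have := congrArg (PowerSeries.map φ4) hmul
    simpa [map_mul, map_sub, map_add, map_pow, map_one, PowerSeries.map_X, F4] using this
  calc F4 k = F4 k * ((1 - (X : (ZMod 4)⟦X⟧) ^ k) * geomZ k) := by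
        rw [one_sub_mul_geomZ hk, mul_one]
    _ = (F4 k * (1 - (X : (ZMod 4)⟦X⟧) ^ k)) * geomZ k := by ring
    _ = (1 + (X : (ZMod 4)⟦X⟧) ^ k) * geomZ k := by rw [hmap]

lemma four_eq_zero : (4 : (ZMod 4)⟦X⟧) = 0 := by
  have : (4 : (ZMod 4)⟦X⟧) = PowerSeries.C (4 : ZMod 4) := (map_ofNat _ 4).symm
  rw [this, show (4 : ZMod 4) = 0 by decide, map_zero]

lemma F4_sq {k : ℕ} (hk : 1 ≤ k) : F4 k ^ 2 = 1 := by
  have hsq : (1 + (X : (ZMod 4)⟦X⟧) ^ k) ^ 2 = (1 - (X : (ZMod 4)⟦X⟧) ^ k) ^ 2 := by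
    have h : (1 + (X : (ZMod 4)⟦X⟧) ^ k) ^ 2
        = (1 - (X : (ZMod 4)⟦X⟧) ^ k) ^ 2 + 4 * X ^ k := by ring
    rw [h, four_eq_zero, zero_mul, add_zero]
  rw [F4_eq hk, mul_pow, hsq, ← mul_pow, one_sub_mul_geomZ hk, one_pow]

lemma F4_one_add {k : ℕ} (hk : 1 ≤ k) :
    F4 k = 1 + 2 * ((X : (ZMod 4)⟦X⟧) ^ k * geomZ k) := by
  rw [F4_eq hk]
  have : (1 + (X : (ZMod 4)⟦X⟧) ^ k) = (1 - X ^ k) + 2 * X ^ k := by ring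
  rw [this, add_mul, one_sub_mul_geomZ hk, mul_assoc]

/-- For all `n ≥ 1`, `pl̄₄(3n) ≡ 0 (mod 4)`. -/
theorem plbark_four_three_n_mod_four (n : ℕ) (hn : 1 ≤ n) :
    plbark 4 (3 * n) ≡ 0 [ZMOD 4] := by
  have key : ((plbark 4 (3 * n) : ℤ) : ZMod 4) = 0 := by
    unfold plbark
    rw [show ((PowerSeries.coeff (3*n) (∏ k ∈ Finset.Icc 1 (3*n), fps k ^ min 4 k) : ℤ) : ZMod 4)
        = φ4 (PowerSeries.coeff (3*n) (∏ k ∈ Finset.Icc 1 (3*n), fps k ^ min 4 k)) from rfl,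
      ← PowerSeries.coeff_map, map_prod]
    have hterm : ∀ k ∈ Finset.Icc 1 (3*n),
        PowerSeries.map φ4 (fps k ^ min 4 k) = F4 k ^ min 4 k := by
      intro k _; rw [map_pow]; rfl
    rw [Finset.prod_congr rfl hterm]
    have h3n : 3 ≤ 3 * n := by omega
    have hsub : ({1, 3} : Finset ℕ) ⊆ Finset.Icc 1 (3 * n) := by
      intro x hx
      simp only [Finset.mem_insert, Finset.mem_singleton] at hx
      rcases hx with rfl | rfl <;> simp [Finset.mem_Icc] <;> omega
    have hprod : ∏ k ∈ Finset.Icc 1 (3*n), F4 k ^ min 4 k = F4 1 * F4 3 := by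
      rw [← Finset.prod_subset hsub]
      · rw [Finset.prod_pair (by norm_num : (1:ℕ) ≠ 3)]
        have h1 : min 4 1 = 1 := rfl
        have h3 : min 4 3 = 3 := rfl
        rw [h1, h3, pow_one, pow_succ, F4_sq (by norm_num), one_mul]
      · intro x hx hnot
        simp only [Finset.mem_Icc] at hx
        simp only [Finset.mem_insert, Finset.mem_singleton, not_or] at hnot
        have hx1 : 1 ≤ x := hx.1
        have heven : min 4 x = 2 * (min 4 x / 2) := by
          rcases Nat.lt_or_ge x 4 with h | h
          · interval_cases x <;> simp_all
          · rw [min_eq_left h]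
        rw [heven, pow_mul, F4_sq hx1, one_pow]
    rw [hprod, F4_one_add (by norm_num : (1:ℕ) ≤ 1), F4_one_add (by norm_num : (1:ℕ) ≤ 3)]
    set A : (ZMod 4)⟦X⟧ := (X : (ZMod 4)⟦X⟧) ^ 1 * geomZ 1 with hA
    set B : (ZMod 4)⟦X⟧ := (X : (ZMod 4)⟦X⟧) ^ 3 * geomZ 3 with hB
    have hexp : (1 + 2 * A) * (1 + 2 * B) = 1 + 2 * A + 2 * B + 4 * (A * B) := by ring
    rw [hexp, four_eq_zero, zero_mul, add_zero]
    rw [map_add, map_add]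
    have hcA : (coeff (3*n)) (2 * A) = 2 := by
      rw [show (2 : (ZMod 4)⟦X⟧) = PowerSeries.C (2 : ZMod 4) from (map_ofNat _ 2).symm,
        PowerSeries.coeff_C_mul, hA, coeff_mul_X_pow'']
      rw [if_pos (by omega)]
      simp [geomZ]
    have hcB : (coeff (3*n)) (2 * B) = 2 := by
      rw [show (2 : (ZMod 4)⟦X⟧) = PowerSeries.C (2 : ZMod 4) from (map_ofNat _ 2).symm,
        PowerSeries.coeff_C_mul, hB, coeff_mul_X_pow'']
      rw [if_pos (by omega)]
      have : (3 : ℕ) ∣ 3 * n - 3 := ⟨n - 1, by omega⟩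
      simp [geomZ, this]
    rw [hcA, hcB, PowerSeries.coeff_one, if_neg (by omega)]
    decide
  have := (ZMod.intCast_zmod_eq_zero_iff_dvd (plbark 4 (3 * n)) 4).mp key
  exact (Int.modEq_zero_iff_dvd).mpr (by exact_mod_cast this)
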